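/- Catalan's identity for Jacobsthal numbers: for all integers d, a: J(d)² − J(d−a)·J(d+a) = (−1)^(d−a) · 2^(d−a) · J(a)², where (−1)^(d−a) and 2^(d−a) denote powers in ℚ with integer exponent d−a. -/

import Mathlib

/-- Catalan's identity for Jacobsthal numbers extended to all integers. -/
theorem stmt_14 (J : ℤ → ℚ)
    (hJ0 : J 0 = 0) (hJ1 : J 1 = 1)
    (hJ : ∀ n : ℤ, J n = J (n - 1) + 2 * J (n - 2))
    (d a : ℤ) :
    J d ^ 2 - J (d - a) * J (d + a)
      = (-1 : ℚ) ^ (d - a) * (2 : ℚ) ^ (d - a) * J a ^ 2 := by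
  have h2 : ∀ n : ℤ, J (n + 2) = J (n + 1) + 2 * J n := by
    intro n
    have := hJ (n + 2)
    simpa [show n + 2 - 1 = n + 1 by ring, show n + 2 - 2 = n by ring] using this
  have key : ∀ n : ℤ, J n = ((2 : ℚ) ^ n - (-1 : ℚ) ^ n) / 3 := by
    have step : ∀ n : ℤ, J n = ((2 : ℚ) ^ n - (-1 : ℚ) ^ n) / 3 ∧
        J (n + 1) = ((2 : ℚ) ^ (n + 1) - (-1 : ℚ) ^ (n + 1)) / 3 := by
      intro n
      induction n using Int.induction_on with
      | zero => norm_num [hJ0, hJ1]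
      | succ k ih =>
        refine ⟨ih.2, ?_⟩
        rw [show ((k : ℤ) + 1 + 1) = k + 2 by ring, h2, ih.1, ih.2]
        rw [zpow_add₀ (by norm_num : (2:ℚ) ≠ 0) k 2,
          zpow_add₀ (by norm_num : (-1:ℚ) ≠ 0) k 2,
          zpow_add₀ (by norm_num : (2:ℚ) ≠ 0) k 1,
          zpow_add₀ (by norm_num : (-1:ℚ) ≠ 0) k 1]
        norm_num; ring
      | pred k ih =>
        have hr := h2 (-(k:ℤ) - 1)
        rw [show (-(k:ℤ) - 1 + 2) = -k + 1 by ring,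
          show (-(k:ℤ) - 1 + 1) = -k by ring] at hr
        have hJk : J (-(k:ℤ) - 1) = (J (-(k:ℤ) + 1) - J (-(k:ℤ))) / 2 := by
          linarith [hr]
        refine ⟨?_, by simpa [show (-(k:ℤ) - 1 + 1) = -k by ring] using ih.1⟩
        rw [hJk, ih.1, ih.2]
        rw [show (-(k:ℤ) - 1) = -k + (-1) by ring,
          zpow_add₀ (by norm_num : (2:ℚ) ≠ 0) (-(k:ℤ)) (-1),
          zpow_add₀ (by norm_num : (-1:ℚ) ≠ 0) (-(k:ℤ)) (-1),
          zpow_add₀ (by norm_num : (2:ℚ) ≠ 0) (-(k:ℤ)) 1,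
          zpow_add₀ (by norm_num : (-1:ℚ) ≠ 0) (-(k:ℤ)) 1]
        norm_num; ring
    exact fun n => (step n).1
  rw [key d, key a, key (d - a), key (d + a),
    zpow_sub₀ (by norm_num : (2:ℚ) ≠ 0), zpow_sub₀ (by norm_num : (-1:ℚ) ≠ 0),
    zpow_add₀ (by norm_num : (2:ℚ) ≠ 0), zpow_add₀ (by norm_num : (-1:ℚ) ≠ 0)]
  have hpne : ((2:ℚ) ^ a) ≠ 0 := zpow_ne_zero _ (by norm_num)
  have hdne : ((2:ℚ) ^ d) ≠ 0 := zpow_ne_zero _ (by norm_num)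
  have hq1 : ((-1:ℚ) ^ a) = 1 ∨ ((-1:ℚ) ^ a) = -1 := by
    rcases Int.even_or_odd a with h | h
    · left; exact h.neg_one_zpow
    · right
      obtain ⟨k, hk⟩ := h
      subst hk
      rw [zpow_add₀ (by norm_num : (-1:ℚ) ≠ 0), show (2:ℤ) * k = k * 2 by ring,
        zpow_mul]
      norm_num
      rcases Int.even_or_odd k with hk | hk
      · left; exact hk.neg_one_zpow
      · right; exact hk.neg_one_zpow
  rcases hq1 with h | h <;> rw [h] <;> field_simp <;> ring
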